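/- For any dimension d ≥ 1, if ν ∈ H_s = {ν ∈ ℕ₀^d : ∏_{k=1}^d (ν_k + 1) ≤ s}, then ∏_{k=1}^d (2ν_k + 1) ≤ s^{log 3 / log 2}. -/

import Mathlib

open Real

private lemma log_ineq : ∀ x : ℝ, 1 ≤ x →
    Real.log 2 * Real.log (2 * x + 1) ≤ Real.log 3 * Real.log (x + 1) := by
  set g : ℝ → ℝ := fun x => Real.log 3 * Real.log (x + 1) - Real.log 2 * Real.log (2 * x + 1)
  have l2 : (0:ℝ) < Real.log 2 := Real.log_pos (by norm_num)
  have l3 : (0:ℝ) < Real.log 3 := Real.log_pos (by norm_num)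
  have l23 : Real.log 2 < Real.log 3 := Real.log_lt_log (by norm_num) (by norm_num)
  have l16 : Real.log 16 = 4 * Real.log 2 := by
    rw [show (16:ℝ) = 2 ^ 4 by norm_num, Real.log_pow]; ring
  have l27 : Real.log 27 = 3 * Real.log 3 := by
    rw [show (27:ℝ) = 3 ^ 3 by norm_num, Real.log_pow]; ring
  have l1627 : Real.log 16 ≤ Real.log 27 := Real.log_le_log (by norm_num) (by norm_num)
  have hderiv : ∀ x : ℝ, 1 ≤ x →
      HasDerivAt g (Real.log 3 * (1 / (x + 1)) - Real.log 2 * (2 / (2 * x + 1))) x := by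
    intro x hx
    have h1 : HasDerivAt (fun x : ℝ => Real.log (x + 1)) (1 / (x + 1)) x := by
      have := (Real.hasDerivAt_log (by linarith : x + 1 ≠ 0)).comp x
        ((hasDerivAt_id x).add_const 1)
      simpa [Function.comp_def] using this
    have h2 : HasDerivAt (fun x : ℝ => Real.log (2 * x + 1)) (2 / (2 * x + 1)) x := by
      have := (Real.hasDerivAt_log (by linarith : 2 * x + 1 ≠ 0)).comp x
        (((hasDerivAt_id x).const_mul 2).add_const 1)
      simpa [div_eq_mul_inv, mul_comm, Function.comp_def] using this
    exact (h1.const_mul (Real.log 3)).sub (h2.const_mul (Real.log 2))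
  have hmono : MonotoneOn g (Set.Ici (1:ℝ)) := by
    apply monotoneOn_of_deriv_nonneg (convex_Ici 1)
    · intro x hx
      exact ((hderiv x hx).continuousAt).continuousWithinAt
    · intro x hx
      rw [interior_Ici] at hx
      exact ((hderiv x hx.le).differentiableAt).differentiableWithinAt
    · intro x hx
      rw [interior_Ici] at hx
      have hx1 : (1:ℝ) ≤ x := le_of_lt hx
      rw [(hderiv x hx1).deriv]
      rw [sub_nonneg, mul_one_div, mul_div_assoc']
      rw [div_le_div_iff₀ (by linarith) (by linarith)]
      nlinarith [mul_le_mul_of_nonneg_left hx1 (sub_pos.mpr l23).le]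
  intro x hx
  have h0 : g 1 ≤ g x := hmono (by simp) hx hx
  have hg1 : g 1 = 0 := by
    show Real.log 3 * Real.log (1 + 1) - Real.log 2 * Real.log (2 * 1 + 1) = 0
    norm_num
    ring
  have hgx : g x = Real.log 3 * Real.log (x + 1) - Real.log 2 * Real.log (2 * x + 1) := rfl
  linarith [hg1 ▸ h0, hgx ▸ h0]

private lemma factor_le (n : ℕ) :
    (2 * (n:ℝ) + 1) ≤ ((n:ℝ) + 1) ^ (Real.log 3 / Real.log 2) := by
  have l2 : (0:ℝ) < Real.log 2 := Real.log_pos (by norm_num)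
  rcases Nat.eq_zero_or_pos n with h | h
  · subst h; simp
  · have hn : (1:ℝ) ≤ (n:ℝ) := by exact_mod_cast h
    have key := log_ineq n hn
    have hpos : (0:ℝ) < (n:ℝ) + 1 := by linarith
    have h2 : Real.log (2 * n + 1) ≤ (Real.log 3 / Real.log 2) * Real.log ((n:ℝ) + 1) := by
      rw [div_mul_eq_mul_div, le_div_iff₀ l2]
      nlinarith [key]
    calc (2 * (n:ℝ) + 1) = Real.exp (Real.log (2 * n + 1)) := by
          rw [Real.exp_log (by linarith)]
      _ ≤ Real.exp ((Real.log 3 / Real.log 2) * Real.log ((n:ℝ) + 1)) := Real.exp_le_exp.mpr h2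
      _ = ((n:ℝ) + 1) ^ (Real.log 3 / Real.log 2) := by
          rw [Real.rpow_def_of_pos hpos]; ring_nf

theorem hyperbolic_cross_legendre_weight_le
    (d s : ℕ) (hd : 1 ≤ d) (hs : 1 ≤ s) (ν : Fin d → ℕ)
    (hν : ∏ k, (ν k + 1) ≤ s) :
    (∏ k, (2 * (ν k : ℝ) + 1)) ≤ (s : ℝ) ^ (Real.log 3 / Real.log 2) := by
  have hα : (0:ℝ) ≤ Real.log 3 / Real.log 2 :=
    div_nonneg (Real.log_nonneg (by norm_num)) (Real.log_nonneg (by norm_num))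
  calc (∏ k, (2 * (ν k : ℝ) + 1))
      ≤ ∏ k, ((ν k : ℝ) + 1) ^ (Real.log 3 / Real.log 2) := by
        apply Finset.prod_le_prod
        · intro i _; positivity
        · intro i _; exact factor_le (ν i)
    _ = (∏ k, ((ν k : ℝ) + 1)) ^ (Real.log 3 / Real.log 2) := by
        rw [← Real.finset_prod_rpow _ _ (fun i _ => by positivity)]
    _ ≤ (s : ℝ) ^ (Real.log 3 / Real.log 2) := by
        apply Real.rpow_le_rpow (by positivity) _ hα
        have : ((∏ k, (ν k + 1) : ℕ) : ℝ) ≤ (s : ℝ) := by exact_mod_cast hν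
        simpa [Nat.cast_prod] using this
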